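/- Let Z be a standard normal random variable. If Y is a real random variable such that E[f′(Y) − Y f(Y)] = 0 for every bounded continuously differentiable function f : ℝ → ℝ with bounded derivative, then Y has the standard normal distribution N(0, 1). -/

import Mathlib

open MeasureTheory ProbabilityTheory

section SteinAuxSection

open Real Set Filter
open scoped NNReal ENNReal

set_option maxHeartbeats 1000000

namespace SteinAux


noncomputable def φ (y : ℝ) : ℝ := Real.exp (-(1/2 : ℝ) * y ^ 2)

lemma φ_pos (y : ℝ) : 0 < φ y := Real.exp_pos _

lemma continuous_φ : Continuous φ := by
  unfold φ; fun_prop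

lemma integrable_φ : Integrable φ := integrable_exp_neg_mul_sq (by norm_num)

lemma integrable_mul_φ : Integrable (fun y => y * φ y) :=
  integrable_mul_exp_neg_mul_sq (by norm_num)

lemma hasDerivAt_negφ (y : ℝ) : HasDerivAt (fun y => -φ y) (y * φ y) y := by
  have h1 : HasDerivAt (fun y : ℝ => -(1/2 : ℝ) * y ^ 2) (-(1/2 : ℝ) * (2 * y ^ 1)) y :=
    (hasDerivAt_pow 2 y).const_mul _
  have h2 := (h1.exp).neg
  have : -(Real.exp (-(1/2 : ℝ) * y ^ 2) * (-(1/2 : ℝ) * (2 * y ^ 1))) = y * φ y := by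
    unfold φ; ring
  rw [this] at h2
  exact h2

lemma tendsto_sq_atBot : Tendsto (fun y : ℝ => y ^ 2) atBot atTop := by
  have h := (tendsto_pow_atTop (α := ℝ) (n := 2) two_ne_zero).comp
    (tendsto_neg_atBot_atTop (G := ℝ))
  refine h.congr fun y => ?_
  simp [Function.comp]

lemma tendsto_φ_atBot : Tendsto φ atBot (nhds 0) := by
  have h1 : Tendsto (fun y : ℝ => -(1/2 : ℝ) * y ^ 2) atBot atBot :=
    (tendsto_const_mul_atBot_of_neg (by norm_num)).2 tendsto_sq_atBot
  exact Real.tendsto_exp_atBot.comp h1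

lemma tendsto_φ_atTop : Tendsto φ atTop (nhds 0) := by
  have h1 : Tendsto (fun y : ℝ => -(1/2 : ℝ) * y ^ 2) atTop atBot :=
    (tendsto_const_mul_atBot_of_neg (by norm_num)).2 (tendsto_pow_atTop two_ne_zero)
  exact Real.tendsto_exp_atBot.comp h1

lemma integral_Iic_mul_φ (w : ℝ) : ∫ y in Iic w, y * φ y = -φ w := by
  have := integral_Iic_of_hasDerivAt_of_tendsto' (f := fun y => -φ y)
    (f' := fun y => y * φ y) (a := w) (m := 0)
    (fun x _ => hasDerivAt_negφ x) integrable_mul_φ.integrableOn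
    (by simpa using tendsto_φ_atBot.neg)
  simpa using this

lemma integral_Ioi_mul_φ (w : ℝ) : ∫ y in Ioi w, y * φ y = φ w := by
  have := integral_Ioi_of_hasDerivAt_of_tendsto' (f := fun y => -φ y)
    (f' := fun y => y * φ y) (a := w) (m := 0)
    (fun x _ => hasDerivAt_negφ x) integrable_mul_φ.integrableOn
    (by simpa using tendsto_φ_atTop.neg)
  simpa using this

lemma tail_Iic {w : ℝ} (hw : w < 0) : ∫ y in Iic w, φ y ≤ φ w / (-w) := by
  have hmono : ∀ y ∈ Iic w, φ y ≤ (y / w) * φ y := by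
    intro y hy
    have h1 : (1 : ℝ) ≤ y / w := by
      rw [le_div_iff_of_neg hw]
      simpa using hy.out
    nlinarith [φ_pos y]
  have hint2 : IntegrableOn (fun y => (y / w) * φ y) (Iic w) := by
    have : (fun y => (y / w) * φ y) = fun y => w⁻¹ * (y * φ y) := by
      funext y; field_simp
    rw [this]
    exact (integrable_mul_φ.const_mul _).integrableOn
  have := setIntegral_mono_on integrable_φ.integrableOn hint2 measurableSet_Iic hmono
  refine this.trans_eq ?_
  have : ∫ y in Iic w, (y / w) * φ y = w⁻¹ * ∫ y in Iic w, y * φ y := by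
    rw [← integral_const_mul]
    congr 1; funext y; field_simp
  rw [this, integral_Iic_mul_φ]
  rw [div_neg, ← neg_div]
  field_simp

lemma tail_Ioi {w : ℝ} (hw : 0 < w) : ∫ y in Ioi w, φ y ≤ φ w / w := by
  have hmono : ∀ y ∈ Ioi w, φ y ≤ (y / w) * φ y := by
    intro y hy
    have h1 : (1 : ℝ) ≤ y / w := by
      rw [le_div_iff₀ hw]
      simpa using hy.out.le
    nlinarith [φ_pos y]
  have hint2 : IntegrableOn (fun y => (y / w) * φ y) (Ioi w) := by
    have : (fun y => (y / w) * φ y) = fun y => w⁻¹ * (y * φ y) := by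
      funext y; field_simp
    rw [this]
    exact (integrable_mul_φ.const_mul _).integrableOn
  have := setIntegral_mono_on integrable_φ.integrableOn hint2 measurableSet_Ioi hmono
  refine this.trans_eq ?_
  have : ∫ y in Ioi w, (y / w) * φ y = w⁻¹ * ∫ y in Ioi w, y * φ y := by
    rw [← integral_const_mul]
    congr 1; funext y; field_simp
  rw [this, integral_Ioi_mul_φ]
  field_simp


lemma exp_mul_φ (w : ℝ) : Real.exp ((1/2 : ℝ) * w ^ 2) * φ w = 1 := by
  unfold φ; rw [← Real.exp_add]; ring_nf; exact Real.exp_zero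

lemma exp_half_le_two : Real.exp ((1/2 : ℝ)) ≤ 2 := by
  have h1 : Real.exp ((1/2 : ℝ)) * Real.exp ((1/2 : ℝ)) = Real.exp 1 := by
    rw [← Real.exp_add]; norm_num
  nlinarith [Real.exp_pos ((1/2 : ℝ)), Real.exp_one_lt_d9]

lemma stein_solution {k : ℝ → ℝ} {D : ℝ} (hk : Continuous k) (hD : ∀ x, |k x| ≤ D)
    (hzero : ∫ y, k y * φ y = 0) :
    ∃ f : ℝ → ℝ, ContDiff ℝ 1 f ∧ (∃ C, ∀ x, |f x| ≤ C) ∧ (∃ C, ∀ x, |deriv f x| ≤ C) ∧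
      ∀ w, deriv f w - w * f w = k w := by
  have hD0 : 0 ≤ D := (abs_nonneg _).trans (hD 0)
  set g : ℝ → ℝ := fun y => k y * φ y with hg_def
  have hg_cont : Continuous g := hk.mul continuous_φ
  have hg_abs : ∀ y, |g y| ≤ D * φ y := by
    intro y
    rw [hg_def, abs_mul, abs_of_pos (φ_pos y)]
    exact mul_le_mul_of_nonneg_right (hD y) (φ_pos y).le
  have hg_int : Integrable g :=
    (integrable_φ.const_mul D).mono' hg_cont.aestronglyMeasurable
      (ae_of_all _ fun y => by simpa [Real.norm_eq_abs] using hg_abs y)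
  set F : ℝ → ℝ := fun w => ∫ y in Iic w, g y with hF_def
  -- derivative of F
  have hF_eq : F = fun w => F 0 + ∫ y in (0:ℝ)..w, g y := by
    funext w
    rw [← intervalIntegral.integral_Iic_sub_Iic hg_int.integrableOn hg_int.integrableOn]
    ring
  have hF_deriv : ∀ w, HasDerivAt F (g w) w := by
    intro w
    rw [hF_eq]
    exact (intervalIntegral.integral_hasDerivAt_right hg_int.intervalIntegrable
      hg_cont.aestronglyMeasurable.stronglyMeasurableAtFilter
      hg_cont.continuousAt).const_add _
  have hF_cont : Continuous F := by
    have : Differentiable ℝ F := fun w => (hF_deriv w).differentiableAt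
    exact this.continuous
  set f : ℝ → ℝ := fun w => Real.exp ((1/2 : ℝ) * w ^ 2) * F w with hf_def
  have hf_deriv : ∀ w, HasDerivAt f (w * f w + k w) w := by
    intro w
    have h1 : HasDerivAt (fun w : ℝ => (1/2 : ℝ) * w ^ 2) ((1/2 : ℝ) * (2 * w ^ 1)) w :=
      (hasDerivAt_pow 2 w).const_mul _
    have h2 := (h1.exp).mul (hF_deriv w)
    have hφ := exp_mul_φ w
    have h3 : Real.exp ((1/2 : ℝ) * w ^ 2) * ((1/2 : ℝ) * (2 * w ^ 1)) * F w
        + Real.exp ((1/2 : ℝ) * w ^ 2) * g w = w * f w + k w := by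
      simp only [hg_def, hf_def]
      linear_combination (k w) * hφ
    rw [h3] at h2
    exact h2
  have hf_cont : Continuous f :=
    (Real.continuous_exp.comp (by continuity)).mul hF_cont
  have hderiv_eq : deriv f = fun w => w * f w + k w := funext fun w => (hf_deriv w).deriv
  -- bounds
  set E : ℝ := ∫ y, φ y with hE_def
  have hE0 : 0 ≤ E := integral_nonneg fun y => (φ_pos y).le
  have hFabs : ∀ w, |F w| ≤ D * E := by
    intro w
    calc |F w| ≤ ∫ y in Iic w, |g y| := by
          simpa [Real.norm_eq_abs] using norm_integral_le_integral_norm (μ := volume.restrict (Iic w)) g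
      _ ≤ ∫ y in Iic w, D * φ y := by
          refine setIntegral_mono_on hg_int.norm.integrableOn
            ((integrable_φ.const_mul D).integrableOn) measurableSet_Iic fun y _ => hg_abs y
      _ ≤ ∫ y, D * φ y := by
          refine setIntegral_le_integral (integrable_φ.const_mul D)
            (ae_of_all _ fun y => mul_nonneg hD0 (φ_pos y).le)
      _ = D * E := by rw [hE_def, integral_const_mul]
  have hF_neg : ∀ w, w < 0 → |F w| ≤ D * (φ w / (-w)) := by
    intro w hw
    calc |F w| ≤ ∫ y in Iic w, |g y| := by
          simpa [Real.norm_eq_abs] using norm_integral_le_integral_norm (μ := volume.restrict (Iic w)) g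
      _ ≤ ∫ y in Iic w, D * φ y :=
          setIntegral_mono_on hg_int.norm.integrableOn
            ((integrable_φ.const_mul D).integrableOn) measurableSet_Iic fun y _ => hg_abs y
      _ = D * ∫ y in Iic w, φ y := integral_const_mul D _
      _ ≤ D * (φ w / (-w)) := mul_le_mul_of_nonneg_left (tail_Iic hw) hD0
  have hF_pos : ∀ w, 0 < w → |F w| ≤ D * (φ w / w) := by
    intro w hw
    have hsplit : F w + ∫ y in Ioi w, g y = 0 := by
      rw [hF_def]
      rw [intervalIntegral.integral_Iic_add_Ioi hg_int.integrableOn hg_int.integrableOn]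
      exact hzero
    have : F w = -∫ y in Ioi w, g y := by linarith
    rw [this, abs_neg]
    calc |∫ y in Ioi w, g y| ≤ ∫ y in Ioi w, |g y| := by
          simpa [Real.norm_eq_abs] using norm_integral_le_integral_norm (μ := volume.restrict (Ioi w)) g
      _ ≤ ∫ y in Ioi w, D * φ y :=
          setIntegral_mono_on hg_int.norm.integrableOn
            ((integrable_φ.const_mul D).integrableOn) measurableSet_Ioi fun y _ => hg_abs y
      _ = D * ∫ y in Ioi w, φ y := integral_const_mul D _
      _ ≤ D * (φ w / w) := mul_le_mul_of_nonneg_left (tail_Ioi hw) hD0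
  -- case bounds
  have hb1 : ∀ w : ℝ, |w| ≤ 1 → |f w| ≤ 2 * (D * E) := by
    intro w hw
    rw [hf_def]
    have h1 : |Real.exp ((1/2 : ℝ) * w ^ 2) * F w|
        = Real.exp ((1/2 : ℝ) * w ^ 2) * |F w| := by
      rw [abs_mul, abs_of_pos (Real.exp_pos _)]
    rw [h1]
    have h2 : Real.exp ((1/2 : ℝ) * w ^ 2) ≤ 2 := by
      refine le_trans ?_ exp_half_le_two
      apply Real.exp_le_exp.2
      nlinarith [sq_abs w, abs_nonneg w]
    exact mul_le_mul h2 (hFabs w) (abs_nonneg _) (by norm_num)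
  have hb2 : ∀ w : ℝ, 1 ≤ |w| → |w| * |f w| ≤ D := by
    intro w hw
    have hw0 : w ≠ 0 := by intro h; rw [h] at hw; simp at hw; linarith
    have h1 : |f w| = Real.exp ((1/2 : ℝ) * w ^ 2) * |F w| := by
      rw [hf_def, abs_mul, abs_of_pos (Real.exp_pos _)]
    rcases lt_or_gt_of_ne hw0 with hneg | hpos
    · have := hF_neg w hneg
      have key : |w| * |f w| ≤ |w| * (Real.exp ((1/2 : ℝ) * w ^ 2) * (D * (φ w / (-w)))) := by
        rw [h1]
        exact mul_le_mul_of_nonneg_left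
          (mul_le_mul_of_nonneg_left this (Real.exp_pos _).le) (abs_nonneg _)
      refine key.trans_eq ?_
      rw [abs_of_neg hneg]
      have hne : -w ≠ 0 := by linarith
      have heq : (-w) * (Real.exp ((1/2 : ℝ) * w ^ 2) * (D * (φ w / -w)))
          = D * (Real.exp ((1/2 : ℝ) * w ^ 2) * φ w) := by
        field_simp
      rw [heq, exp_mul_φ w, mul_one]
    · have := hF_pos w hpos
      have key : |w| * |f w| ≤ |w| * (Real.exp ((1/2 : ℝ) * w ^ 2) * (D * (φ w / w))) := by
        rw [h1]
        exact mul_le_mul_of_nonneg_left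
          (mul_le_mul_of_nonneg_left this (Real.exp_pos _).le) (abs_nonneg _)
      refine key.trans_eq ?_
      rw [abs_of_pos hpos]
      have hne : w ≠ 0 := by linarith
      have heq : w * (Real.exp ((1/2 : ℝ) * w ^ 2) * (D * (φ w / w)))
          = D * (Real.exp ((1/2 : ℝ) * w ^ 2) * φ w) := by
        field_simp
      rw [heq, exp_mul_φ w, mul_one]
  have hfb : ∀ w, |f w| ≤ 2 * (D * E) + D := by
    intro w
    rcases le_or_gt |w| 1 with hw | hw
    · have := hb1 w hw
      linarith
    · have h2 := hb2 w hw.le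
      have h3 : |f w| ≤ |w| * |f w| := le_mul_of_one_le_left (abs_nonneg _) hw.le
      have h4 := mul_nonneg hD0 hE0
      linarith
  have hwfb : ∀ w, |w * f w| ≤ 2 * (D * E) + D := by
    intro w
    rw [abs_mul]
    rcases le_or_gt |w| 1 with hw | hw
    · have h2 := hb1 w hw
      have h3 : |w| * |f w| ≤ |f w| := mul_le_of_le_one_left (abs_nonneg _) hw
      linarith
    · have := hb2 w hw.le
      linarith [mul_nonneg hD0 hE0]
  refine ⟨f, ?_, ⟨2 * (D * E) + D, hfb⟩, ⟨2 * (2 * (D * E) + D), ?_⟩, ?_⟩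
  · rw [contDiff_one_iff_deriv]
    refine ⟨fun w => (hf_deriv w).differentiableAt, ?_⟩
    rw [hderiv_eq]
    exact (continuous_id.mul hf_cont).add hk
  · intro w
    rw [hderiv_eq]
    have h1 := hwfb w
    have h2 := (hD w).trans (le_add_of_nonneg_left (by positivity) : D ≤ 2 * (D * E) + D)
    calc |w * f w + k w| ≤ |w * f w| + |k w| := abs_add_le _ _
      _ ≤ 2 * (2 * (D * E) + D) := by linarith
  · intro w
    rw [hderiv_eq]
    ring


lemma integral_φ : ∫ y, φ y = Real.sqrt (2 * π) := by
  have := integral_gaussian (1/2 : ℝ)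
  rw [show π / (1/2 : ℝ) = 2 * π by ring] at this
  exact this

lemma gaussianPDFReal_eq (x : ℝ) :
    gaussianPDFReal 0 1 x = (Real.sqrt (2 * π))⁻¹ * φ x := by
  unfold gaussianPDFReal φ
  push_cast
  congr 1
  · norm_num
  · congr 1
    ring

lemma integral_gaussianReal_repr (hb : ℝ → ℝ) (hbm : Measurable hb) :
    ∫ x, hb x ∂(gaussianReal 0 1) = (Real.sqrt (2 * π))⁻¹ * ∫ y, hb y * φ y := by
  rw [gaussianReal_of_var_ne_zero 0 one_ne_zero]
  have hmeas : Measurable fun x => (gaussianPDFReal 0 1 x).toNNReal :=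
    (measurable_gaussianPDFReal 0 1).real_toNNReal
  have hd : (gaussianPDF 0 1) = fun x => ((gaussianPDFReal 0 1 x).toNNReal : ℝ≥0∞) := rfl
  rw [hd, integral_withDensity_eq_integral_smul hmeas hb]
  rw [← integral_const_mul]
  congr 1
  funext x
  rw [NNReal.smul_def, smul_eq_mul, Real.coe_toNNReal _ (gaussianPDFReal_nonneg 0 1 x),
    gaussianPDFReal_eq]
  ring


end SteinAux

end SteinAuxSection

section Main

open Real Set Filter SteinAux
open scoped NNReal ENNReal

set_option maxHeartbeats 1000000

/-- Stein's characterization of the standard normal distribution: if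
`E[f'(Y) - Y f(Y)] = 0` for every bounded `C¹` function `f : ℝ → ℝ` with
bounded derivative, then `Y` is standard normal. -/
theorem stein_characterization_of_gaussian
    {Ω : Type*} [MeasurableSpace Ω] (P : Measure Ω) [IsProbabilityMeasure P]
    (Y : Ω → ℝ) (hY : Measurable Y)
    (h : ∀ f : ℝ → ℝ, ContDiff ℝ 1 f → (∃ C : ℝ, ∀ x : ℝ, |f x| ≤ C) →
      (∃ C : ℝ, ∀ x : ℝ, |deriv f x| ≤ C) →
      ∫ ω, (deriv f (Y ω) - Y ω * f (Y ω)) ∂P = 0) :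
    P.map Y = gaussianReal 0 1 := by
  have sqrt_pos : 0 < Real.sqrt (2 * π) := Real.sqrt_pos.2 (by positivity)
  have key : ∀ (hb : ℝ → ℝ), Continuous hb → ∀ C : ℝ, (∀ x, |hb x| ≤ C) →
      ∫ ω, hb (Y ω) ∂P = ∫ x, hb x ∂(gaussianReal 0 1) := by
    intro hb hbc C hbC
    have hC0 : 0 ≤ C := (abs_nonneg _).trans (hbC 0)
    set μ0 : ℝ := ∫ x, hb x ∂(gaussianReal 0 1) with hμ0
    have hbφ_int : Integrable (fun y => hb y * φ y) :=
      (integrable_φ.const_mul C).mono' (hbc.mul continuous_φ).aestronglyMeasurable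
        (ae_of_all _ fun y => by
          rw [Real.norm_eq_abs, abs_mul, abs_of_pos (φ_pos y)]
          exact mul_le_mul_of_nonneg_right (hbC y) (φ_pos y).le)
    have hrepr : μ0 = (Real.sqrt (2 * π))⁻¹ * ∫ y, hb y * φ y :=
      integral_gaussianReal_repr hb hbc.measurable
    have hzero : ∫ y, (hb y - μ0) * φ y = 0 := by
      have : (fun y => (hb y - μ0) * φ y) = fun y => hb y * φ y - μ0 * φ y := by
        funext y; ring
      rw [this, integral_sub hbφ_int (integrable_φ.const_mul μ0), integral_const_mul,
        integral_φ]
      rw [hrepr]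
      field_simp
      ring
    obtain ⟨f, hf1, hf2, hf3, hf4⟩ := stein_solution (k := fun y => hb y - μ0)
      (D := C + |μ0|) (hbc.sub continuous_const)
      (fun x => (abs_sub (hb x) μ0).trans (add_le_add_left (hbC x) _)) hzero
    have h0 := h f hf1 hf2 hf3
    have h1 : ∫ ω, (hb (Y ω) - μ0) ∂P = 0 := by
      rw [← h0]
      congr 1
      funext ω
      rw [hf4 (Y ω)]
    have hbY_int : Integrable (fun ω => hb (Y ω)) P :=
      (integrable_const C).mono' (hbc.measurable.comp hY).aestronglyMeasurable
        (ae_of_all _ fun ω => by rw [Real.norm_eq_abs]; exact hbC (Y ω))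
    rw [integral_sub hbY_int (integrable_const μ0), integral_const] at h1
    simp only [probReal_univ, measure_univ, ENNReal.toReal_one, one_smul] at h1
    linarith
  have : IsProbabilityMeasure (P.map Y) := Measure.isProbabilityMeasure_map hY.aemeasurable
  refine ext_of_forall_lintegral_eq_of_IsFiniteMeasure fun f => ?_
  have hcont : Continuous fun x => (f x : ℝ) := NNReal.continuous_coe.comp f.continuous
  have hbound : ∀ x, |(f x : ℝ)| ≤ ((nndist f 0 : ℝ≥0) : ℝ) := by
    intro x
    rw [abs_of_nonneg (f x).coe_nonneg]
    exact_mod_cast BoundedContinuousFunction.NNReal.upper_bound f x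
  have h1 : ∫ x, (f x : ℝ) ∂(P.map Y) = ∫ x, (f x : ℝ) ∂(gaussianReal 0 1) := by
    rw [integral_map hY.aemeasurable hcont.aestronglyMeasurable]
    exact key _ hcont _ hbound
  have h2 := BoundedContinuousFunction.toReal_lintegral_coe_eq_integral f (P.map Y)
  have h3 := BoundedContinuousFunction.toReal_lintegral_coe_eq_integral f (gaussianReal 0 1)
  have fin1 := BoundedContinuousFunction.lintegral_lt_top_of_nnreal (P.map Y) f
  have fin2 := BoundedContinuousFunction.lintegral_lt_top_of_nnreal (gaussianReal 0 1) f
  rw [← ENNReal.toReal_eq_toReal_iff' fin1.ne fin2.ne]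
  rw [h2, h3, h1]

end Main
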